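/- Let (B⁻¹, B⁰, d_B), (G⁻¹, G⁰, d_G) be crossed modules and π, π' : B• → G• morphisms of crossed modules. Fix g ∈ G⁰. Then d_g : B⁻¹ → B⁰ ⋉_π G⁻¹ given by d_g(β) = (d_B(β), π⁻¹(β)⁻¹ · ^{g}π'⁻¹(β)) is a group homomorphism, and its image lies in the stabilizer Stab_g = {(b, γ) : d_G(γ) = π⁰(b)⁻¹ · g π'⁰(b) g⁻¹} of g for the action of B⁰ ⋉_π G⁻¹ on G⁰ by (b,γ)·g' = d_G(γ) π⁰(b) g' π'⁰(b)⁻¹. -/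
import Mathlib


open SemidirectProduct

/-- For morphisms `π, π' : B• → G•` of crossed modules and `g ∈ G⁰`, the map
`d_g(β) = (d_B(β), π⁻¹(β)⁻¹ · ᵍπ'⁻¹(β))` into `B⁰ ⋉_π G⁻¹` is a group homomorphism
whose image lies in the stabilizer of `g`, i.e. the component
`γ_β = π⁻¹(β)⁻¹ · ᵍπ'⁻¹(β)` satisfies `d_G(γ_β) = π⁰(d_B β)⁻¹ · g · π'⁰(d_B β) · g⁻¹`. -/
theorem d_g_hom_into_stabilizer
    {B0 B1 G0 G1 : Type*} [Group B0] [Group B1] [Group G0] [Group G1]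
    [MulDistribMulAction B0 B1] [MulDistribMulAction G0 G1]
    (dB : B1 →* B0) (dG : G1 →* G0)
    (hB1 : ∀ (b : B0) (β : B1), dB (b • β) = b * dB β * b⁻¹)
    (hB2 : ∀ β β' : B1, (dB β) • β' = β * β' * β⁻¹)
    (hG1 : ∀ (g : G0) (γ : G1), dG (g • γ) = g * dG γ * g⁻¹)
    (hG2 : ∀ γ γ' : G1, (dG γ) • γ' = γ * γ' * γ⁻¹)
    (π0 π'0 : B0 →* G0) (π1 π'1 : B1 →* G1)
    (hcomm : ∀ β : B1, π0 (dB β) = dG (π1 β))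
    (hequiv : ∀ (b : B0) (β : B1), π1 (b • β) = (π0 b) • (π1 β))
    (hcomm' : ∀ β : B1, π'0 (dB β) = dG (π'1 β))
    (hequiv' : ∀ (b : B0) (β : B1), π'1 (b • β) = (π'0 b) • (π'1 β))
    (g : G0) :
    let φ : B0 →* MulAut G1 := (MulDistribMulAction.toMulAut G0 G1).comp π0
    let dg : B1 → (G1 ⋊[φ] B0) := fun β => inr (dB β) * inl ((π1 β)⁻¹ * g • π'1 β)
    (∀ β1 β2 : B1, dg (β1 * β2) = dg β1 * dg β2) ∧
    (∀ β : B1, dG ((π1 β)⁻¹ * g • π'1 β) = (π0 (dB β))⁻¹ * (g * π'0 (dB β) * g⁻¹)) := by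
  intro φ dg
  constructor
  · intro β1 β2
    simp only [dg]
    ext
    · simp only [mul_left, mul_right, left_inl, right_inl, left_inr, right_inr,
        one_mul, mul_one, map_one, MulAut.one_apply]
      show (π0 (dB (β1 * β2))) • ((π1 (β1 * β2))⁻¹ * g • π'1 (β1 * β2)) =
        (π0 (dB β1)) • ((π1 β1)⁻¹ * g • π'1 β1) *
          (π0 (dB β1)) • ((π0 (dB β2)) • ((π1 β2)⁻¹ * g • π'1 β2))
      rw [map_mul dB, map_mul π0, mul_smul, ← smul_mul']
      congr 1
      rw [hcomm β2, hG2, hG2, map_mul, map_mul, mul_inv_rev, smul_mul']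
      group
    · simp only [mul_right, right_inl, right_inr, mul_one, one_mul, map_mul]
  · intro β
    rw [map_mul, map_inv, hG1, ← hcomm, ← hcomm']
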